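/- Let r be an even positive integer and X an indeterminate. Then Σ_{j=0}^{r/2} (2^{2j}/(2j+1))·binom(j + r/2, 2j)·(X² − 1)^{r/2 − j} = ((X+1)^{r+1} − (X−1)^{r+1})/(2(r+1)) as an identity of polynomials in X. -/

import Mathlib

open Polynomial Finset

private def ee (m j : ℕ) : ℚ :=
  (2 * m + 1) * ((2:ℚ) ^ (2*j) / (2*j+1) * (Nat.choose (j + m) (2*j)))

private lemma ee_zero {m j : ℕ} (h : m < j) : ee m j = 0 := by
  simp [ee, Nat.choose_eq_zero_of_lt (by omega : j + m < 2*j)]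

private lemma star (k j : ℕ) (h1 : 1 ≤ j) :
    ee (k+2) j = 2 * ee (k+1) j + 4 * ee (k+1) (j-1) - ee k j := by
  obtain ⟨i, rfl⟩ : ∃ i, j = i + 1 := ⟨j - 1, by omega⟩
  simp only [Nat.add_sub_cancel]
  rcases le_or_gt i k with hik | hik
  · obtain ⟨t, rfl⟩ : ∃ t, k = i + t := ⟨k - i, by omega⟩
    have e1 : Nat.choose ((i+1)+(i+t+2)) (2*(i+1)) = Nat.choose (2*i+t+1+2) (2*i+2) := by
      congr 1 <;> omega
    have e2 : Nat.choose ((i+1)+(i+t+1)) (2*(i+1)) = Nat.choose (2*i+t+1+1) (2*i+2) := by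
      congr 1 <;> omega
    have e3 : Nat.choose (i+(i+t+1)) (2*i) = Nat.choose (2*i+t+1) (2*i) := by congr 1; omega
    have e4 : Nat.choose ((i+1)+(i+t)) (2*(i+1)) = Nat.choose (2*i+t+1) (2*i+2) := by
      congr 1 <;> omega
    have hB : Nat.choose (2*i+t+1+1) (2*i+2) =
        Nat.choose (2*i+t+1) (2*i+1) + Nat.choose (2*i+t+1) (2*i+2) :=
      Nat.choose_succ_succ' (2*i+t+1) (2*i+1)
    have hB' : Nat.choose (2*i+t+1+1) (2*i+1) =
        Nat.choose (2*i+t+1) (2*i) + Nat.choose (2*i+t+1) (2*i+1) :=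
      Nat.choose_succ_succ' (2*i+t+1) (2*i)
    have hA : Nat.choose (2*i+t+1+2) (2*i+2) =
        Nat.choose (2*i+t+1+1) (2*i+1) + Nat.choose (2*i+t+1+1) (2*i+2) :=
      Nat.choose_succ_succ' (2*i+t+1+1) (2*i+1)
    have hR : (Nat.choose (2*i+t+1) (2*i+1) : ℚ) * (2*i+1) =
        (Nat.choose (2*i+t+1) (2*i) : ℚ) * (t+1) := by
      have h := Nat.choose_succ_right_eq (2*i+t+1) (2*i)
      rw [show 2*i+t+1 - 2*i = t+1 by omega] at h
      exact_mod_cast congrArg (Nat.cast : ℕ → ℚ) h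
    simp only [ee, e1, e2, e3, e4, hA, hB, hB']
    push_cast
    generalize ha : ((2*i+t+1).choose (2*i) : ℚ) = a at *
    generalize hb : ((2*i+t+1).choose (2*i+1) : ℚ) = b at *
    generalize hc : ((2*i+t+1).choose (2*i+2) : ℚ) = c at *
    have d1 : (2*((i:ℚ)+1)+1) ≠ 0 := by positivity
    have d2 : (2*(i:ℚ)+1) ≠ 0 := by positivity
    field_simp
    linear_combination ((2:ℚ)^(2*i) * 16) * hR
  · by_cases hi2 : i = k+1
    · subst hi2
      rw [ee_zero (show k+1 < k+2 by omega), ee_zero (show k < k+2 by omega)]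
      unfold ee
      rw [show (k+2)+(k+2) = 2*(k+2) by ring, Nat.choose_self,
        show (k+1)+(k+1) = 2*(k+1) by ring, Nat.choose_self]
      have d1 : (2*((k:ℚ)+2)+1) ≠ 0 := by positivity
      have d2 : (2*((k:ℚ)+1)+1) ≠ 0 := by positivity
      push_cast
      field_simp
      ring
    · rw [ee_zero (show k+2 < i+1 by omega), ee_zero (show k+1 < i+1 by omega),
        ee_zero (show k+1 < i by omega), ee_zero (show k < i+1 by omega)]
      ring

private noncomputable def Ap (m : ℕ) : Polynomial ℚ :=
  ∑ j ∈ range (m+1), ee m j • (X^2 - 1 : Polynomial ℚ)^(m - j)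

private noncomputable def Qp (m : ℕ) : Polynomial ℚ :=
  (X + 1 : Polynomial ℚ)^(2*m+1) - (X - 1)^(2*m+1)

private lemma Ap_ext (m n : ℕ) (h : m ≤ n) :
    Ap m = ∑ j ∈ range (n+1), ee m j • (X^2 - 1 : Polynomial ℚ)^(m - j) := by
  unfold Ap
  apply Finset.sum_subset
  · exact Finset.range_subset_range.mpr (by omega)
  · intro j hj hj'
    rw [ee_zero (show m < j by simp at hj'; omega), zero_smul]

private lemma Qp_rec (k : ℕ) :
    Qp (k+2) = (2*(X^2-1)+4) * Qp (k+1) - (X^2-1)^2 * Qp k := by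
  unfold Qp
  rw [show 2*(k+2)+1 = (2*k+1)+4 by ring, show 2*(k+1)+1 = (2*k+1)+2 by ring]
  ring

private lemma Ap_rec (k : ℕ) :
    Ap (k+2) = (2*(X^2-1)+4) * Ap (k+1) - (X^2-1)^2 * Ap k := by
  have h1 : Ap (k+1) = ∑ j ∈ range (k+3), ee (k+1) j • (X^2-1 : Polynomial ℚ)^(k+1-j) :=
    Ap_ext _ _ (by omega)
  have h0 : Ap k = ∑ j ∈ range (k+3), ee k j • (X^2-1 : Polynomial ℚ)^(k-j) :=
    Ap_ext _ _ (by omega)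
  have hmulY : (X^2-1 : Polynomial ℚ) * Ap (k+1)
      = ∑ j ∈ range (k+3), ee (k+1) j • (X^2-1 : Polynomial ℚ)^(k+2-j) := by
    rw [h1, Finset.mul_sum]
    refine Finset.sum_congr rfl fun j hj => ?_
    rcases le_or_gt j (k+1) with h | h
    · rw [mul_smul_comm, ← pow_succ', show (k+1-j)+1 = k+2-j by omega]
    · rw [ee_zero (by omega), zero_smul, zero_smul, mul_zero]
  have hsqY : (X^2-1 : Polynomial ℚ)^2 * Ap k
      = ∑ j ∈ range (k+3), ee k j • (X^2-1 : Polynomial ℚ)^(k+2-j) := by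
    rw [h0, Finset.mul_sum]
    refine Finset.sum_congr rfl fun j hj => ?_
    rcases le_or_gt j k with h | h
    · rw [mul_smul_comm, ← pow_add, show 2+(k-j) = k+2-j by omega]
    · rw [ee_zero (by omega), zero_smul, zero_smul, mul_zero]
  have hshift : Ap (k+1)
      = (∑ j ∈ range (k+3), ee (k+1) (j-1) • (X^2-1 : Polynomial ℚ)^(k+2-j))
        - ee (k+1) 0 • (X^2-1 : Polynomial ℚ)^(k+2) := by
    have hs := Finset.sum_range_succ'
      (fun j => ee (k+1) (j-1) • (X^2-1 : Polynomial ℚ)^(k+2-j)) (k+3)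
    rw [Finset.sum_range_succ] at hs
    simp only [Nat.add_sub_cancel, Nat.succ_sub_succ_eq_sub, Nat.sub_zero, Nat.zero_sub] at hs
    rw [ee_zero (show k+1 < k+2 by omega), zero_smul, add_zero] at hs
    rw [h1, hs]
    abel
  have reform : (2*(X^2-1)+4) * Ap (k+1) - (X^2-1)^2 * Ap k
      = ((2:ℚ) • ((X^2-1 : Polynomial ℚ) * Ap (k+1)) + (4:ℚ) • Ap (k+1))
        - (X^2-1 : Polynomial ℚ)^2 * Ap k := by
    simp only [Polynomial.smul_eq_C_mul, map_ofNat]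
    ring
  rw [reform, hmulY, hsqY, hshift, smul_sub, Finset.smul_sum, Finset.smul_sum]
  simp only [smul_smul]
  rw [show Ap (k+2) = ∑ j ∈ range (k+3), ee (k+2) j • (X^2-1 : Polynomial ℚ)^(k+2-j) from rfl]
  rw [show (∑ x ∈ range (k+3), (2 * ee (k+1) x) • (X^2-1 : Polynomial ℚ)^(k+2-x))
        + ((∑ x ∈ range (k+3), (4 * ee (k+1) (x-1)) • (X^2-1 : Polynomial ℚ)^(k+2-x))
            - (4 * ee (k+1) 0) • (X^2-1 : Polynomial ℚ)^(k+2))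
        - (∑ j ∈ range (k+3), ee k j • (X^2-1 : Polynomial ℚ)^(k+2-j))
      = ((∑ x ∈ range (k+3), (2 * ee (k+1) x) • (X^2-1 : Polynomial ℚ)^(k+2-x))
          + (∑ x ∈ range (k+3), (4 * ee (k+1) (x-1)) • (X^2-1 : Polynomial ℚ)^(k+2-x))
          - (∑ j ∈ range (k+3), ee k j • (X^2-1 : Polynomial ℚ)^(k+2-j)))
        - (4 * ee (k+1) 0) • (X^2-1 : Polynomial ℚ)^(k+2) from by abel]
  rw [← Finset.sum_add_distrib, ← Finset.sum_sub_distrib, eq_sub_iff_add_eq]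
  symm
  rw [← sub_eq_iff_eq_add', ← Finset.sum_sub_distrib]
  have key : ∀ j ∈ range (k+3),
      ((2 * ee (k+1) j) • (X^2-1 : Polynomial ℚ)^(k+2-j)
          + (4 * ee (k+1) (j-1)) • (X^2-1 : Polynomial ℚ)^(k+2-j)
          - ee k j • (X^2-1 : Polynomial ℚ)^(k+2-j))
        - ee (k+2) j • (X^2-1 : Polynomial ℚ)^(k+2-j)
      = if j = 0 then (4 * ee (k+1) 0) • (X^2-1 : Polynomial ℚ)^(k+2) else 0 := by
    intro j hj
    rcases eq_or_ne j 0 with rfl | hne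
    · have hsc : ee (k+2) 0 = 2 * ee (k+1) 0 - ee k 0 := by
        simp only [ee, Nat.zero_add, Nat.mul_zero, Nat.choose_zero_right, pow_zero]
        push_cast
        ring
      simp only [if_pos, Nat.zero_sub, Nat.sub_zero, hsc]
      module
    · rw [if_neg hne, star k j (by omega)]
      module
  rw [Finset.sum_congr rfl key, Finset.sum_ite_eq' (range (k+3)) 0]
  simp

private lemma main_id (m : ℕ) : (2 : Polynomial ℚ) * Ap m = Qp m := by
  induction m using Nat.twoStepInduction with
  | zero =>
    simp [Ap, Qp, ee]
    ring
  | one =>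
    have h0 : ee 1 0 = 3 := by norm_num [ee]
    have h1 : ee 1 1 = 4 := by norm_num [ee]
    simp [Ap, Qp, Finset.sum_range_succ, h0, h1, Polynomial.smul_eq_C_mul, map_ofNat]
    ring
  | more k ih1 ih2 =>
    rw [Qp_rec, ← ih1, ← ih2, Ap_rec]
    ring

theorem stmt7 (r : ℕ) (hr : 0 < r) (he : Even r) :
    ∑ j ∈ Finset.range (r / 2 + 1),
        (((2 : ℚ) ^ (2 * j) / (2 * (j : ℚ) + 1)) * (Nat.choose (j + r / 2) (2 * j) : ℚ)) •
          ((Polynomial.X ^ 2 - 1 : Polynomial ℚ) ^ (r / 2 - j))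
      = (2 * (r : ℚ) + 2)⁻¹ •
          ((Polynomial.X + 1 : Polynomial ℚ) ^ (r + 1) - (Polynomial.X - 1) ^ (r + 1)) := by
  obtain ⟨m, rfl⟩ := he
  have hm2 : (m + m) / 2 = m := by omega
  rw [hm2]
  have hmne : (2*(m:ℚ)+1) ≠ 0 := by positivity
  have hL : ∑ j ∈ Finset.range (m + 1),
      (((2 : ℚ) ^ (2 * j) / (2 * (j : ℚ) + 1)) * (Nat.choose (j + m) (2 * j) : ℚ)) •
        ((Polynomial.X ^ 2 - 1 : Polynomial ℚ) ^ (m - j))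
      = (2*(m:ℚ)+1)⁻¹ • Ap m := by
    rw [Ap, Finset.smul_sum]
    refine Finset.sum_congr rfl fun j hj => ?_
    rw [smul_smul]
    congr 1
    rw [ee, inv_mul_cancel_left₀ hmne]
  rw [hL]
  have hQ : ((Polynomial.X + 1 : Polynomial ℚ) ^ (m + m + 1) - (Polynomial.X - 1) ^ (m + m + 1))
      = Qp m := by
    rw [Qp, show 2*m+1 = m+m+1 by ring]
  rw [hQ, ← main_id m]
  rw [show (2 : Polynomial ℚ) * Ap m = (2:ℚ) • Ap m by
    simp [Polynomial.smul_eq_C_mul, map_ofNat]]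
  rw [smul_smul]
  congr 1
  push_cast
  field_simp
  ring
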